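/- Let M be a compact connected subset of the annulus [1,2] × Circle that is contained in a closed set D ⊆ [1,2] × Circle homeomorphic to the closed unit disk, and let τ : [1,2] × Circle → [1,2] × Circle be the covering map τ(r, z) = (r, z^2). Then every connected component C of τ^{-1}(M) is mapped by τ homeomorphically onto M. -/

import Mathlib

open Complex Set

private lemma circle_sq_half_arg (z : Circle) :
    (Circle.exp (Complex.arg (z : ℂ) / 2)) ^ 2 = z := by
  rw [sq, ← Circle.exp_add, add_halves, Circle.exp_arg]

private lemma cont_halfarg {X : Type*} [TopologicalSpace X] {Q : X → Circle}
    (hQ : Continuous Q) (hs : ∀ x, (Q x : ℂ) ∈ Complex.slitPlane) :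
    Continuous fun x => Circle.exp (Complex.arg (Q x : ℂ) / 2) := by
  rw [continuous_iff_continuousAt]
  intro x
  have c1 : ContinuousAt (fun x => (Q x : ℂ)) x :=
    continuous_subtype_val.continuousAt.comp hQ.continuousAt
  have c2 : ContinuousAt (fun x => Complex.arg (Q x : ℂ)) x :=
    ContinuousAt.comp (g := Complex.arg) (Complex.continuousAt_arg (hs x)) c1
  exact Circle.exp.continuous.continuousAt.comp (c2.div_const 2)

private lemma circle_div_slit {u v : Circle} (hd : dist u v < 1) :
    ((u / v : Circle) : ℂ) ∈ Complex.slitPlane := by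
  by_contra hcon
  rw [Complex.mem_slitPlane_iff] at hcon
  push_neg at hcon
  set w : ℂ := ((u / v : Circle) : ℂ) with hw
  have habs : ‖w‖ = 1 := Circle.norm_coe _
  have him : w.im = 0 := hcon.2
  have hre : w.re ≤ 0 := hcon.1
  have hsq : w.re ^ 2 = 1 := by
    have := Complex.sq_norm w
    rw [habs, Complex.normSq_apply, him] at this
    nlinarith
  have hwre : w.re = -1 := by nlinarith
  have hwm : w = -1 := by
    apply Complex.ext <;> simp [hwre, him]
  have hv0 : (v : ℂ) ≠ 0 := Circle.coe_ne_zero v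
  have huv : (u : ℂ) = -(v : ℂ) := by
    have : (u : ℂ) / v = -1 := by rw [← Circle.coe_div, ← hw, hwm]
    field_simp at this
    linear_combination this
  have : dist u v = 2 := by
    rw [show dist u v = dist (u:ℂ) (v:ℂ) from rfl, Complex.dist_eq, huv]
    have : -(v:ℂ) - v = (-2) * v := by ring
    rw [this, norm_mul]
    simp [Circle.norm_coe]
  linarith [this ▸ hd]

private lemma exists_sqrt (D : Set ((Set.Icc (1:ℝ) 2) × Circle))
    (hDclosed : IsClosed D)
    (h : D ≃ₜ (Metric.closedBall (0:ℂ) 1)) :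
    ∃ s : D → Circle, Continuous s ∧
      ∀ d : D, (s d) ^ 2 = (d : (Set.Icc (1:ℝ) 2) × Circle).2 := by
  haveI : CompactSpace D := isCompact_iff_compactSpace.mp hDclosed.isCompact
  have kmem : ∀ (t : Set.Icc (0:ℝ) 1) (x : Metric.closedBall (0:ℂ) 1),
      (t : ℝ) • (x : ℂ) ∈ Metric.closedBall (0:ℂ) 1 := by
    intro t x
    rw [mem_closedBall_zero_iff]
    have hx : ‖(x : ℂ)‖ ≤ 1 := mem_closedBall_zero_iff.mp x.2
    rw [norm_smul]
    have ht : ‖(t:ℝ)‖ ≤ 1 := by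
      rw [Real.norm_eq_abs, _root_.abs_of_nonneg t.2.1]; exact t.2.2
    calc ‖(t:ℝ)‖ * ‖(x:ℂ)‖ ≤ 1 * 1 := by
          apply mul_le_mul ht hx (norm_nonneg _) zero_le_one
      _ = 1 := by ring
  let k : (Set.Icc (0:ℝ) 1) × (Metric.closedBall (0:ℂ) 1) → (Metric.closedBall (0:ℂ) 1) :=
    fun q => ⟨(q.1 : ℝ) • (q.2 : ℂ), kmem q.1 q.2⟩
  have kcont : Continuous k := by
    apply Continuous.subtype_mk
    exact (continuous_subtype_val.comp continuous_fst).smul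
      (continuous_subtype_val.comp continuous_snd)
  have kval : ∀ q, (k q : ℂ) = (q.1 : ℝ) • (q.2 : ℂ) := fun q => rfl
  let G : (Set.Icc (0:ℝ) 1) × D → Circle :=
    fun q => ((h.symm (k (q.1, h q.2)) : (Set.Icc (1:ℝ) 2) × Circle)).2
  have hGdef : ∀ q, G q =
      ((h.symm (k (q.1, h q.2)) : (Set.Icc (1:ℝ) 2) × Circle)).2 := fun q => rfl
  have Gcont : Continuous G := by
    apply continuous_snd.comp
    apply continuous_subtype_val.comp
    exact h.symm.continuous.comp (kcont.comp (continuous_fst.prodMk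
      (h.continuous.comp continuous_snd)))
  obtain ⟨δ, hδ, hd⟩ := Metric.uniformContinuous_iff.mp
    (CompactSpace.uniformContinuous_of_continuous Gcont) 1 one_pos
  obtain ⟨n, hn⟩ := exists_nat_one_div_lt hδ
  set N : ℕ := n + 1 with hN
  have hNpos : (0:ℝ) < N := by positivity
  have hn' : 1 / (N : ℝ) < δ := by
    have : ((N : ℕ) : ℝ) = (n : ℝ) + 1 := by rw [hN]; push_cast; ring
    rw [this]; exact hn
  let T : ℕ → Set.Icc (0:ℝ) 1 := fun m =>
    ⟨min ((m : ℝ) / N) 1, le_min (by positivity) zero_le_one, min_le_right _ _⟩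
  have hTval : ∀ m : ℕ, ((T m : ℝ)) = min ((m : ℝ) / N) 1 := fun m => rfl
  have hTdist : ∀ m : ℕ, dist (T (m+1)) (T m) < δ := by
    intro m
    rw [Subtype.dist_eq, Real.dist_eq, hTval, hTval]
    have e1 : (((m+1 : ℕ)) : ℝ) / N - (m : ℝ) / N = 1 / N := by
      push_cast; ring
    calc |min (((m+1 : ℕ) : ℝ) / N) 1 - min ((m : ℝ) / N) 1|
        ≤ max |((m+1 : ℕ) : ℝ) / N - (m : ℝ) / N| |(1:ℝ) - 1| :=
          abs_min_sub_min_le_max _ _ _ _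
      _ = 1 / N := by
          rw [sub_self, abs_zero, max_eq_left (abs_nonneg _), e1,
            _root_.abs_of_nonneg (by positivity : (0:ℝ) ≤ 1 / N)]
      _ < δ := hn'
  have hGstep : ∀ (m : ℕ) (d : D), dist (G (T (m+1), d)) (G (T m, d)) < 1 := by
    intro m d
    apply hd
    rw [Prod.dist_eq, dist_self]
    exact max_lt (hTdist m) hδ
  let S : ℕ → D → Circle := fun m => Nat.rec
    (fun d => Circle.exp (Complex.arg ((G (T 0, d)) : ℂ) / 2))
    (fun m Sm d => Sm d *
      Circle.exp (Complex.arg ((G (T (m+1), d) / G (T m, d) : Circle) : ℂ) / 2)) m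
  have hS0 : ∀ d, S 0 d = Circle.exp (Complex.arg ((G (T 0, d)) : ℂ) / 2) :=
    fun d => rfl
  have hSsucc : ∀ m d, S (m+1) d = S m d *
      Circle.exp (Complex.arg ((G (T (m+1), d) / G (T m, d) : Circle) : ℂ) / 2) :=
    fun m d => rfl
  have hinv : ∀ m : ℕ, Continuous (S m) ∧ ∀ d, (S m d) ^ 2 = G (T m, d) := by
    intro m
    induction m with
    | zero =>
      constructor
      · have hG0 : ∀ d : D, G (T 0, d) = G (T 0, h.symm ⟨0, by simp⟩) := by
          intro d
          rw [hGdef, hGdef]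
          have hk : ∀ x : Metric.closedBall (0:ℂ) 1, k (T 0, x) = ⟨0, by simp⟩ := by
            intro x
            apply Subtype.ext
            rw [kval]
            show ((T 0 : ℝ)) • (x : ℂ) = 0
            rw [hTval]
            norm_num
          rw [hk, hk]
        have heq : S 0 = fun _ =>
            Circle.exp (Complex.arg ((G (T 0, h.symm ⟨0, by simp⟩)) : ℂ) / 2) := by
          funext d
          rw [hS0, hG0 d]
        rw [heq]
        exact continuous_const
      · intro d
        rw [hS0]
        exact circle_sq_half_arg _
    | succ m ih =>
      have hslit : ∀ d : D,
          ((G (T (m+1), d) / G (T m, d) : Circle) : ℂ) ∈ Complex.slitPlane :=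
        fun d => circle_div_slit (hGstep m d)
      constructor
      · have heq : S (m+1) = fun d => S m d *
            Circle.exp (Complex.arg ((G (T (m+1), d) / G (T m, d) : Circle) : ℂ) / 2) := by
          funext d; rw [hSsucc]
        rw [heq]
        apply ih.1.mul
        apply cont_halfarg _ hslit
        exact (Gcont.comp (continuous_const.prodMk continuous_id)).div'
          (Gcont.comp (continuous_const.prodMk continuous_id))
      · intro d
        rw [hSsucc, mul_pow, ih.2 d, circle_sq_half_arg]
        exact mul_div_cancel _ _
  refine ⟨S N, (hinv N).1, fun d => ?_⟩
  rw [(hinv N).2 d, hGdef]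
  have hTN : k (T N, h d) = h d := by
    apply Subtype.ext
    rw [kval]
    show ((T N : ℝ)) • ((h d) : ℂ) = (h d : ℂ)
    rw [hTval, div_self (ne_of_gt hNpos), min_self, one_smul]
  rw [hTN, h.symm_apply_apply]

/-- If a compact connected subset `M` of the annulus `[1,2] × Circle` is
contained in a closed set `D` homeomorphic to the closed unit disk, then every
connected component of the preimage of `M` under the double covering
`τ(r, z) = (r, z²)` is mapped by `τ` homeomorphically onto `M`. -/
theorem components_of_preimage_homeomorphic
    (M D : Set ((Set.Icc (1:ℝ) 2) × Circle))
    (hMcomp : IsCompact M) (hMconn : IsConnected M)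
    (hMD : M ⊆ D) (hDclosed : IsClosed D)
    (hDdisk : Nonempty (D ≃ₜ (Metric.closedBall (0:ℂ) 1)))
    (τ : (Set.Icc (1:ℝ) 2) × Circle → (Set.Icc (1:ℝ) 2) × Circle)
    (hτ : τ = fun p => (p.1, p.2 ^ 2)) :
    ∀ p ∈ τ ⁻¹' M,
      ∃ e : (connectedComponentIn (τ ⁻¹' M) p) ≃ₜ M,
        ∀ x : connectedComponentIn (τ ⁻¹' M) p, (e x : (Set.Icc (1:ℝ) 2) × Circle) = τ x := by
  subst hτ
  obtain ⟨h⟩ := hDdisk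
  obtain ⟨s, hs_cont, hs_sq⟩ := exists_sqrt D hDclosed h
  haveI : CompactSpace M := isCompact_iff_compactSpace.mp hMcomp
  haveI : ConnectedSpace M := Subtype.connectedSpace hMconn
  set j : Circle := Circle.exp Real.pi with hjdef
  have hj : (j : ℂ) = -1 := by
    rw [hjdef, Circle.coe_exp]
    simp [Complex.exp_pi_mul_I]
  let c : Bool → Circle := fun b => cond b 1 j
  have hc2 : ∀ b, (c b) ^ 2 = 1 := by
    intro b
    cases b
    · apply Subtype.ext
      show ((j ^ 2 : Circle) : ℂ) = 1
      rw [sq, Circle.coe_mul, hj]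
      norm_num
    · show (1 : Circle) ^ 2 = 1
      rw [one_pow]
  let f : Bool → M → (Set.Icc (1:ℝ) 2) × Circle := fun b m =>
    ((m : (Set.Icc (1:ℝ) 2) × Circle).1, c b * s ⟨(m : _), hMD m.2⟩)
  have hτf : ∀ b m, ((f b m).1, (f b m).2 ^ 2) = (m : (Set.Icc (1:ℝ) 2) × Circle) := by
    intro b m
    have h2 : (c b * s ⟨(m : _), hMD m.2⟩) ^ 2
        = ((m : (Set.Icc (1:ℝ) 2) × Circle)).2 := by
      rw [mul_pow, hc2, one_mul]
      exact hs_sq ⟨(m : _), hMD m.2⟩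
    exact Prod.ext rfl h2
  have hfc : ∀ b, Continuous (f b) := by
    intro b
    apply Continuous.prodMk
    · exact continuous_fst.comp continuous_subtype_val
    · exact continuous_const.mul (hs_cont.comp (continuous_inclusion hMD))
  have hfinj : ∀ b, Function.Injective (f b) := by
    intro b m m' he
    apply Subtype.ext
    rw [← hτf b m, ← hτf b m', he]
  let R : Bool → Set ((Set.Icc (1:ℝ) 2) × Circle) := fun b => Set.range (f b)
  have hRcomp : ∀ b, IsCompact (R b) := fun b => isCompact_range (hfc b)
  have hRconn : ∀ b, IsConnected (R b) := fun b => isConnected_range (hfc b)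
  have hRsub : ∀ b, R b ⊆ (fun p : (Set.Icc (1:ℝ) 2) × Circle => (p.1, p.2 ^ 2)) ⁻¹' M := by
    rintro b x ⟨m, hm⟩
    show ((x.1, x.2 ^ 2) : (Set.Icc (1:ℝ) 2) × Circle) ∈ M
    rw [← hm, hτf b m]
    exact m.2
  have hcover : (fun p : (Set.Icc (1:ℝ) 2) × Circle => (p.1, p.2 ^ 2)) ⁻¹' M
      ⊆ R true ∪ R false := by
    intro q hq
    have hqM : ((q.1, q.2 ^ 2) : (Set.Icc (1:ℝ) 2) × Circle) ∈ M := hq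
    have hσ2 : (s ⟨(q.1, q.2 ^ 2), hMD hqM⟩) ^ 2 = q.2 ^ 2 := hs_sq ⟨(q.1, q.2 ^ 2), hMD hqM⟩
    set σ : Circle := s ⟨(q.1, q.2 ^ 2), hMD hqM⟩ with hσdef
    have hC : (σ : ℂ) = q.2 ∨ (σ : ℂ) = -((q.2 : Circle) : ℂ) := by
      have h1 : ((σ ^ 2 : Circle) : ℂ) = (((q.2 : Circle) ^ 2 : Circle) : ℂ) :=
        congrArg _ hσ2
      rw [sq, sq, Circle.coe_mul, Circle.coe_mul] at h1
      exact mul_self_eq_mul_self_iff.mp h1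
    rcases hC with h1 | h1
    · left
      refine ⟨⟨(q.1, q.2 ^ 2), hqM⟩, ?_⟩
      refine Prod.ext rfl ?_
      show (1 : Circle) * σ = q.2
      rw [one_mul]
      exact Subtype.ext h1
    · right
      refine ⟨⟨(q.1, q.2 ^ 2), hqM⟩, ?_⟩
      refine Prod.ext rfl ?_
      show j * σ = q.2
      apply Subtype.ext
      rw [Circle.coe_mul, hj, h1]
      ring
  have hdisj : Disjoint (R true) (R false) := by
    rw [Set.disjoint_left]
    rintro x ⟨m, hm⟩ ⟨m', hm'⟩
    have hmm : m' = m := by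
      apply Subtype.ext
      rw [← hτf true m, ← hτf false m', hm, hm']
    have h2 : (1 : Circle) * s ⟨(m : _), hMD m.2⟩ = j * s ⟨(m : _), hMD m.2⟩ := by
      have hfe := hm.trans hm'.symm
      rw [hmm] at hfe
      exact congrArg Prod.snd hfe
    have h3 : (1 : Circle) = j := mul_right_cancel h2
    have h4 : ((1 : Circle) : ℂ) = -1 := by rw [h3, hj]
    rw [Circle.coe_one] at h4
    norm_num at h4
  intro p hp
  obtain ⟨b, hpb⟩ : ∃ b, p ∈ R b := by
    rcases hcover hp with h1 | h1
    exacts [⟨true, h1⟩, ⟨false, h1⟩]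
  have hdisj' : Disjoint (R b) (R (!b)) := by
    cases b
    · exact hdisj.symm
    · exact hdisj
  have hcover' : (fun p : (Set.Icc (1:ℝ) 2) × Circle => (p.1, p.2 ^ 2)) ⁻¹' M
      ⊆ R b ∪ R (!b) := by
    intro x hx
    cases b
    · exact (hcover hx).symm
    · exact hcover hx
  have hCsub := connectedComponentIn_subset
    ((fun p : (Set.Icc (1:ℝ) 2) × Circle => (p.1, p.2 ^ 2)) ⁻¹' M) p
  have hpC := mem_connectedComponentIn hp
  have hRbC : R b ⊆ connectedComponentIn _ p :=
    (hRconn b).isPreconnected.subset_connectedComponentIn hpb (hRsub b)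
  obtain ⟨U, V, hU, hV, hRU, hRV, hUV⟩ :=
    SeparatedNhds.of_isCompact_isCompact (hRcomp b) (hRcomp (!b)) hdisj'
  have hCU : connectedComponentIn
      ((fun p : (Set.Icc (1:ℝ) 2) × Circle => (p.1, p.2 ^ 2)) ⁻¹' M) p ⊆ U := by
    apply isPreconnected_connectedComponentIn.subset_left_of_subset_union hU hV hUV
    · intro x hx
      rcases hcover' (hCsub hx) with h1 | h1
      exacts [Or.inl (hRU h1), Or.inr (hRV h1)]
    · exact ⟨p, hpC, hRU hpb⟩
  have hCRb : connectedComponentIn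
      ((fun p : (Set.Icc (1:ℝ) 2) × Circle => (p.1, p.2 ^ 2)) ⁻¹' M) p ⊆ R b := by
    intro x hx
    rcases hcover' (hCsub hx) with h1 | h1
    · exact h1
    · exact absurd (hRV h1) (fun hxV => Set.disjoint_left.mp hUV (hCU hx) hxV)
  have hC : connectedComponentIn
      ((fun p : (Set.Icc (1:ℝ) 2) × Circle => (p.1, p.2 ^ 2)) ⁻¹' M) p = R b :=
    Set.Subset.antisymm hCRb hRbC
  have hemb := ((hfc b).isClosedEmbedding (hfinj b)).toIsEmbedding
  let e1 := Homeomorph.setCongr hC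
  let e2 : M ≃ₜ R b := hemb.toHomeomorph
  refine ⟨e1.trans e2.symm, ?_⟩
  intro x
  have key : f b ((e1.trans e2.symm) x) = (x : (Set.Icc (1:ℝ) 2) × Circle) := by
    have h1 := congrArg Subtype.val (e2.apply_symm_apply (e1 x))
    exact h1
  show ((e1.trans e2.symm) x : (Set.Icc (1:ℝ) 2) × Circle)
    = (((x : (Set.Icc (1:ℝ) 2) × Circle)).1, ((x : (Set.Icc (1:ℝ) 2) × Circle)).2 ^ 2)
  rw [← key]
  exact (hτf b _).symm
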